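/- The feasible 0/1 assignments of extents to the edges of P_x and P_y satisfying the three extent constraints are in bijection with the vertex covers of the constraint graph C_G, and the total extent of an assignment equals the size of the corresponding vertex cover. In particular, the minimum total extent equals the minimum vertex cover number of C_G. -/

import Mathlib

open Finset

variable {m : ℕ}

/-- First endpoint of the `e`-th edge of the Hamiltonian path induced by `π`. -/
def pFst (π : Equiv.Perm (Fin (m+1))) (e : Fin m) : Fin (m+1) := π e.castSucc

/-- Second endpoint of the `e`-th edge of the Hamiltonian path induced by `π`. -/
def pSnd (π : Equiv.Perm (Fin (m+1))) (e : Fin m) : Fin (m+1) := π e.succ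

/-- Position of vertex `v` along the Hamiltonian path induced by `π`. -/
def pos (π : Equiv.Perm (Fin (m+1))) (v : Fin (m+1)) : ℕ := (π.symm v : ℕ)

/-- Edges `e` and `f = e+1` of `P_x` form a switch pair: both `P_x`-neighbours of the
middle internal vertex `πx e.succ` lie on the same side of it in `π_y`. -/
def SwitchPairX (πx πy : Equiv.Perm (Fin (m+1))) (e f : Fin m) : Prop :=
  (e : ℕ) + 1 = (f : ℕ) ∧
    ((pos πy (pFst πx e) < pos πy (pSnd πx e) ∧ pos πy (pSnd πx f) < pos πy (pSnd πx e)) ∨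
     (pos πy (pSnd πx e) < pos πy (pFst πx e) ∧ pos πy (pSnd πx e) < pos πy (pSnd πx f)))

/-- Switch pairs of `P_y`: the same with the roles of the permutations swapped. -/
def SwitchPairY (πx πy : Equiv.Perm (Fin (m+1))) (e f : Fin m) : Prop :=
  SwitchPairX πy πx e f

/-- The `P_x`-edge `e` and the `P_y`-edge `f` have the same (unordered) pair of endpoints. -/
def SharedEdge (πx πy : Equiv.Perm (Fin (m+1))) (e f : Fin m) : Prop :=
  (pFst πx e = pFst πy f ∧ pSnd πx e = pSnd πy f) ∨
  (pFst πx e = pSnd πy f ∧ pSnd πx e = pFst πy f)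

/-- Alignment of the `P_x`-edge `e`: positive (`True`) iff its endpoints appear in the
same relative order in `π_x` and `π_y`. -/
def AlignX (πx πy : Equiv.Perm (Fin (m+1))) (e : Fin m) : Prop :=
  pos πy (pFst πx e) < pos πy (pSnd πx e)

/-- Alignment of the `P_y`-edge `e`. -/
def AlignY (πx πy : Equiv.Perm (Fin (m+1))) (e : Fin m) : Prop :=
  pos πx (pFst πy e) < pos πx (pSnd πy e)

/-- The constraint graph `C_G` on the disjoint union `V_X ⊕ V_Y` of the edges of the
two paths: switch pairs inside each part, and a matching edge for each shared edge. -/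
def CG (πx πy : Equiv.Perm (Fin (m+1))) : SimpleGraph (Fin m ⊕ Fin m) where
  Adj a b :=
    match a, b with
    | .inl e, .inl f => SwitchPairX πx πy e f ∨ SwitchPairX πx πy f e
    | .inr e, .inr f => SwitchPairY πx πy e f ∨ SwitchPairY πx πy f e
    | .inl e, .inr f => SharedEdge πx πy e f
    | .inr f, .inl e => SharedEdge πx πy e f
  symm := ⟨by rintro (e|e) (f|f) h <;> simp only at h ⊢ <;> tauto⟩
  loopless := ⟨by
    rintro (e|e) (⟨h, -⟩ | ⟨h, -⟩) <;> omega⟩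


/-- Feasibility of nonnegative integer extents `dx` (on `P_x`-edges) and `dy`
(on `P_y`-edges): the three extent constraints. -/
def Feasible (πx πy : Equiv.Perm (Fin (m+1))) (dx dy : Fin m → ℕ) : Prop :=
  (∀ e f : Fin m, SwitchPairX πx πy e f → 1 ≤ dx e + dx f) ∧
  (∀ e f : Fin m, SwitchPairY πx πy e f → 1 ≤ dy e + dy f) ∧
  (∀ e f : Fin m, SharedEdge πx πy e f → 1 ≤ dx e + dy f)

/-- The coordinate of vertex `v` obtained by prefix-summing the extents `d`
along the path induced by `π`, starting from `0`. -/
def coord (π : Equiv.Perm (Fin (m+1))) (d : Fin m → ℕ) (v : Fin (m+1)) : ℕ :=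
  ∑ i ∈ Finset.univ.filter (fun i : Fin m => (i : ℕ) < pos π v), d i

/-- The total extent of an assignment. -/
def totalExtent (dx dy : Fin m → ℕ) : ℕ := (∑ e, dx e) + ∑ f, dy f

/-- A vertex cover of a simple graph: a set of vertices meeting every edge. -/
def IsVertexCover {V : Type*} (G : SimpleGraph V) (S : Set V) : Prop :=
  ∀ a b, G.Adj a b → a ∈ S ∨ b ∈ S

/-- The set of constraint-graph vertices picked by a 0/1 extent assignment. -/
def toCover (dx dy : Fin m → ℕ) : Set (Fin m ⊕ Fin m) :=
  {a | Sum.elim (fun e => dx e = 1) (fun f => dy f = 1) a}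


lemma ncard_ones {m : ℕ} (d : Fin m → ℕ) (hd : ∀ e, d e ≤ 1) :
    {e | d e = 1}.ncard = ∑ e, d e := by
  classical
  have h : {e | d e = 1} = ↑(Finset.univ.filter (fun e => d e = 1)) := by
    ext e; simp
  rw [h, Set.ncard_coe_finset, Finset.card_filter]
  refine Finset.sum_congr rfl fun e _ => ?_
  have := hd e
  split <;> omega

lemma toCover_eq {m : ℕ} (dx dy : Fin m → ℕ) :
    toCover dx dy = Sum.inl '' {e | dx e = 1} ∪ Sum.inr '' {f | dy f = 1} := by
  ext a
  cases a <;> simp [toCover]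

lemma ncard_toCover {m : ℕ} (dx dy : Fin m → ℕ)
    (hx : ∀ e, dx e ≤ 1) (hy : ∀ f, dy f ≤ 1) :
    (toCover dx dy).ncard = totalExtent dx dy := by
  rw [toCover_eq, Set.ncard_union_eq]
  · rw [Set.ncard_image_of_injective _ Sum.inl_injective,
      Set.ncard_image_of_injective _ Sum.inr_injective,
      ncard_ones dx hx, ncard_ones dy hy, totalExtent]
  · rw [Set.disjoint_left]
    rintro a ⟨e, -, rfl⟩ ⟨f, -, h⟩
    exact Sum.inl_ne_inr h.symm

lemma feas_iff_cover {m : ℕ} (πx πy : Equiv.Perm (Fin (m+1))) (dx dy : Fin m → ℕ)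
    (hx : ∀ e, dx e ≤ 1) (hy : ∀ f, dy f ≤ 1) :
    Feasible πx πy dx dy ↔ IsVertexCover (CG πx πy) (toCover dx dy) := by
  constructor
  · rintro ⟨h1, h2, h3⟩ a b hab
    match a, b with
    | .inl e, .inl f =>
      have : 1 ≤ dx e + dx f := by
        rcases hab with h | h
        · exact h1 e f h
        · have := h1 f e h; omega
      have he := hx e; have hf := hx f
      simp only [toCover, Set.mem_setOf_eq, Sum.elim_inl]
      omega
    | .inr e, .inr f =>
      have : 1 ≤ dy e + dy f := by
        rcases hab with h | h
        · exact h2 e f h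
        · have := h2 f e h; omega
      have he := hy e; have hf := hy f
      simp only [toCover, Set.mem_setOf_eq, Sum.elim_inr]
      omega
    | .inl e, .inr f =>
      have := h3 e f hab
      have he := hx e; have hf := hy f
      simp only [toCover, Set.mem_setOf_eq, Sum.elim_inl, Sum.elim_inr]
      omega
    | .inr f, .inl e =>
      have := h3 e f hab
      have he := hx e; have hf := hy f
      simp only [toCover, Set.mem_setOf_eq, Sum.elim_inl, Sum.elim_inr]
      omega
  · intro hc
    refine ⟨fun e f h => ?_, fun e f h => ?_, fun e f h => ?_⟩
    · have := hc (.inl e) (.inl f) (Or.inl h)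
      simp only [toCover, Set.mem_setOf_eq, Sum.elim_inl] at this
      omega
    · have := hc (.inr e) (.inr f) (Or.inl h)
      simp only [toCover, Set.mem_setOf_eq, Sum.elim_inr] at this
      omega
    · have := hc (.inl e) (.inr f) h
      simp only [toCover, Set.mem_setOf_eq, Sum.elim_inl, Sum.elim_inr] at this
      omega

/-- feasible 0/1 extent assignments are in bijection with vertex covers of
the constraint graph `C_G`, the total extent equals the size of the corresponding
cover, and the minimum total extent equals the minimum vertex cover number. -/
theorem feasible01_iff_vertexCover {m : ℕ} (πx πy : Equiv.Perm (Fin (m+1))) :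
    (∀ dx dy : Fin m → ℕ, (∀ e, dx e ≤ 1) → (∀ f, dy f ≤ 1) →
      ((Feasible πx πy dx dy ↔ IsVertexCover (CG πx πy) (toCover dx dy)) ∧
        (toCover dx dy).ncard = totalExtent dx dy)) ∧
    Set.BijOn (fun p : (Fin m → ℕ) × (Fin m → ℕ) => toCover p.1 p.2)
      {p | (∀ e, p.1 e ≤ 1) ∧ (∀ f, p.2 f ≤ 1) ∧ Feasible πx πy p.1 p.2}
      {S | IsVertexCover (CG πx πy) S} ∧
    sInf {t | ∃ dx dy : Fin m → ℕ, (∀ e, dx e ≤ 1) ∧ (∀ f, dy f ≤ 1) ∧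
        Feasible πx πy dx dy ∧ totalExtent dx dy = t} =
      sInf {k | ∃ S : Set (Fin m ⊕ Fin m), IsVertexCover (CG πx πy) S ∧ S.ncard = k}  := by
  classical
  have key : ∀ dx dy : Fin m → ℕ, (∀ e, dx e ≤ 1) → (∀ f, dy f ≤ 1) →
      ((Feasible πx πy dx dy ↔ IsVertexCover (CG πx πy) (toCover dx dy)) ∧
        (toCover dx dy).ncard = totalExtent dx dy) :=
    fun dx dy hx hy => ⟨feas_iff_cover πx πy dx dy hx hy, ncard_toCover dx dy hx hy⟩
  have surj : ∀ S : Set (Fin m ⊕ Fin m), IsVertexCover (CG πx πy) S →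
      ∃ dx dy : Fin m → ℕ, (∀ e, dx e ≤ 1) ∧ (∀ f, dy f ≤ 1) ∧
        Feasible πx πy dx dy ∧ toCover dx dy = S := by
    intro S hS
    refine ⟨fun e => if Sum.inl e ∈ S then 1 else 0,
      fun f => if Sum.inr f ∈ S then 1 else 0, fun e => ?_, fun f => ?_, ?_, ?_⟩
    · dsimp only; split <;> omega
    · dsimp only; split <;> omega
    · rw [feas_iff_cover]
      · intro a b hab
        rcases hS a b hab with h | h
        · left; cases a <;> simp [toCover, h]
        · right; cases b <;> simp [toCover, h]
      · intro e; split <;> omega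
      · intro f; split <;> omega
    · ext a
      cases a <;> simp only [toCover, Set.mem_setOf_eq, Sum.elim_inl, Sum.elim_inr] <;>
        split <;> simp_all
  refine ⟨key, ⟨?_, ?_, ?_⟩, ?_⟩
  · rintro ⟨dx, dy⟩ ⟨hx, hy, hf⟩
    exact ((key dx dy hx hy).1.mp hf)
  · rintro ⟨dx, dy⟩ ⟨hx, hy, -⟩ ⟨dx', dy'⟩ ⟨hx', hy', -⟩ h
    have hl : ∀ e, dx e = dx' e := by
      intro e
      have := Set.ext_iff.mp h (Sum.inl e)
      simp only [toCover, Set.mem_setOf_eq, Sum.elim_inl] at this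
      have h1 : dx e ≤ 1 := hx e; have h2 : dx' e ≤ 1 := hx' e; omega
    have hr : ∀ f, dy f = dy' f := by
      intro f
      have := Set.ext_iff.mp h (Sum.inr f)
      simp only [toCover, Set.mem_setOf_eq, Sum.elim_inr] at this
      have h1 : dy f ≤ 1 := hy f; have h2 : dy' f ≤ 1 := hy' f; omega
    exact Prod.ext (funext hl) (funext hr)
  · intro S hS
    obtain ⟨dx, dy, hx, hy, hf, hEq⟩ := surj S hS
    exact ⟨(dx, dy), ⟨hx, hy, hf⟩, hEq⟩
  · congr 1
    ext t
    simp only [Set.mem_setOf_eq]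
    constructor
    · rintro ⟨dx, dy, hx, hy, hf, rfl⟩
      exact ⟨toCover dx dy, (key dx dy hx hy).1.mp hf, (key dx dy hx hy).2⟩
    · rintro ⟨S, hS, rfl⟩
      obtain ⟨dx, dy, hx, hy, hf, hEq⟩ := surj S hS
      exact ⟨dx, dy, hx, hy, hf, by rw [← hEq, (key dx dy hx hy).2]⟩
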